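/- (van der Corput with weights) Let (u_n) be a sequence in a Hilbert space H with ‖u_n‖ ≤ 1 for all n. Then limsup_{N→∞} ‖(1/N)∑_{n=0}^{N-1} u_n‖² ≤ 4 · liminf_{H→∞} (1/H)∑_{h=0}^{H-1} limsup_{N→∞} |(1/N)∑_{n=0}^{N-1} ⟨u_{n+h}, u_n⟩|. -/

import Mathlib

open Filter Finset

private lemma limsup01_nonneg {p : ℕ → ℝ} {C : ℝ} (h0 : ∀ N, 0 ≤ p N) (h1 : ∀ N, p N ≤ C) :
    0 ≤ limsup p atTop :=
  le_limsup_of_frequently_le (Frequently.of_forall h0) (isBoundedUnder_of ⟨C, h1⟩)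

private lemma limsup01_le {p : ℕ → ℝ} {C : ℝ} (h0 : ∀ N, 0 ≤ p N) (h1 : ∀ N, p N ≤ C) :
    limsup p atTop ≤ C :=
  limsup_le_of_le (isCoboundedUnder_le_of_le _ fun N => h0 N) (Eventually.of_forall h1)

private lemma limsup_le_limsup_of_err {p q : ℕ → ℝ} {C : ℝ}
    (hp0 : ∀ N, 0 ≤ p N) (hq1 : ∀ N, q N ≤ C)
    (h : ∀ ε > (0:ℝ), ∀ᶠ N in atTop, p N ≤ q N + ε) :
    limsup p atTop ≤ limsup q atTop := by
  have hbq : IsBoundedUnder (· ≤ ·) atTop q := isBoundedUnder_of ⟨C, hq1⟩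
  have hcp : IsCoboundedUnder (· ≤ ·) atTop p :=
    isCoboundedUnder_le_of_le _ fun N => hp0 N
  refine le_of_forall_pos_le_add fun ε hε => ?_
  refine limsup_le_of_le hcp ?_
  have h2 : ∀ᶠ N in atTop, q N < limsup q atTop + ε / 2 :=
    eventually_lt_of_limsup_lt (by linarith [half_pos hε]) hbq
  filter_upwards [h (ε/2) (half_pos hε), h2] with N h1 h2
  linarith

private lemma limsup_const_mul_le' {k C : ℝ} (hk : 0 ≤ k) {p : ℕ → ℝ}
    (h0 : ∀ N, 0 ≤ p N) (h1 : ∀ N, p N ≤ C) :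
    limsup (fun N => k * p N) atTop ≤ k * limsup p atTop := by
  rcases eq_or_lt_of_le hk with hk0 | hk0
  · simp [← hk0, limsup_const]
  · refine le_of_forall_pos_le_add fun ε hε => ?_
    refine limsup_le_of_le (isCoboundedUnder_le_of_le _ fun N => mul_nonneg hk (h0 N)) ?_
    have h2 : ∀ᶠ N in atTop, p N < limsup p atTop + ε / k :=
      eventually_lt_of_limsup_lt (lt_add_of_pos_right _ (div_pos hε hk0)) (isBoundedUnder_of ⟨C, h1⟩)
    filter_upwards [h2] with N h2
    have := mul_le_mul_of_nonneg_left h2.le hk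
    rw [mul_add] at this
    rw [mul_div_cancel₀ ε (ne_of_gt hk0)] at this
    linarith

private lemma limsup_sum_le {ι : Type*} (s : Finset ι) (F : ι → ℕ → ℝ)
    (h0 : ∀ i ∈ s, ∀ N, 0 ≤ F i N) (h1 : ∀ i ∈ s, ∀ N, F i N ≤ 1) :
    limsup (fun N => ∑ i ∈ s, F i N) atTop ≤ ∑ i ∈ s, limsup (F i) atTop := by
  classical
  induction s using Finset.induction with
  | empty => simp [limsup_const]
  | @insert x s hx ih =>
    rw [Finset.sum_insert hx]
    have hFx0 := h0 x (mem_insert_self x s)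
    have hFx1 := h1 x (mem_insert_self x s)
    have hrest0 : ∀ i ∈ s, ∀ N, 0 ≤ F i N := fun i hi => h0 i (mem_insert_of_mem hi)
    have hrest1 : ∀ i ∈ s, ∀ N, F i N ≤ 1 := fun i hi => h1 i (mem_insert_of_mem hi)
    have key : limsup (fun N => ∑ i ∈ insert x s, F i N) atTop ≤
        limsup (F x) atTop + limsup (fun N => ∑ i ∈ s, F i N) atTop := by
      have : (fun N => ∑ i ∈ insert x s, F i N) = (F x) + (fun N => ∑ i ∈ s, F i N) := by
        funext N; simp [Finset.sum_insert hx]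
      rw [this]
      refine limsup_add_le (isBoundedUnder_of ⟨0, hFx0⟩) (isBoundedUnder_of ⟨1, hFx1⟩)
        (isCoboundedUnder_le_of_le _ fun N => Finset.sum_nonneg fun i hi => hrest0 i hi N)
        (isBoundedUnder_of ⟨(s.card : ℝ), fun N => ?_⟩)
      calc ∑ i ∈ s, F i N ≤ ∑ i ∈ s, 1 := Finset.sum_le_sum fun i hi => hrest1 i hi N
        _ = s.card := by simp
    exact key.trans (by linarith [ih hrest0 hrest1])

private lemma shift_sum_err {G : Type*} [SeminormedAddCommGroup G] (w : ℕ → G)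
    (hw : ∀ n, ‖w n‖ ≤ 1) {s N : ℕ} (hs : s ≤ N) :
    ‖(∑ n ∈ range N, w (n + s)) - ∑ n ∈ range N, w n‖ ≤ 2 * s := by
  have h1 : ∑ n ∈ range N, w (n + s) = ∑ m ∈ Ico s (N + s), w m := by
    rw [Finset.sum_Ico_eq_sum_range]
    simp only [Nat.add_sub_cancel]
    exact Finset.sum_congr rfl fun i _ => by rw [add_comm]
  have h2 : ∑ m ∈ Ico s (N + s), w m = ∑ m ∈ Ico s N, w m + ∑ m ∈ Ico N (N + s), w m :=
    (Finset.sum_Ico_consecutive _ hs (Nat.le_add_right N s)).symm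
  have h3 : ∑ n ∈ range N, w n = ∑ m ∈ Ico 0 s, w m + ∑ m ∈ Ico s N, w m := by
    rw [Finset.range_eq_Ico, ← Finset.sum_Ico_consecutive _ (Nat.zero_le s) hs]
  have h4 : (∑ n ∈ range N, w (n + s)) - ∑ n ∈ range N, w n
      = (∑ m ∈ Ico N (N + s), w m) - ∑ m ∈ Ico 0 s, w m := by
    rw [h1, h2, h3]; abel
  rw [h4]
  have b1 : ‖∑ m ∈ Ico N (N + s), w m‖ ≤ s := by
    calc ‖∑ m ∈ Ico N (N + s), w m‖ ≤ ∑ m ∈ Ico N (N + s), ‖w m‖ := norm_sum_le _ _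
      _ ≤ ∑ m ∈ Ico N (N + s), 1 := Finset.sum_le_sum fun i _ => hw i
      _ = s := by simp
  have b2 : ‖∑ m ∈ Ico 0 s, w m‖ ≤ s := by
    calc ‖∑ m ∈ Ico 0 s, w m‖ ≤ ∑ m ∈ Ico 0 s, ‖w m‖ := norm_sum_le _ _
      _ ≤ ∑ m ∈ Ico 0 s, 1 := Finset.sum_le_sum fun i _ => hw i
      _ = s := by simp
  calc ‖(∑ m ∈ Ico N (N + s), w m) - ∑ m ∈ Ico 0 s, w m‖
      ≤ ‖∑ m ∈ Ico N (N + s), w m‖ + ‖∑ m ∈ Ico 0 s, w m‖ := norm_sub_le _ _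
    _ ≤ 2 * s := by linarith

private lemma avg_bound {𝕜 : Type*} [RCLike 𝕜] (v : ℕ → 𝕜) (hv : ∀ n, ‖v n‖ ≤ 1) (N : ℕ) :
    ‖(N : 𝕜)⁻¹ * ∑ n ∈ range N, v n‖ ≤ 1 := by
  rcases Nat.eq_zero_or_pos N with rfl | hN
  · simp
  · rw [norm_mul, norm_inv, RCLike.norm_natCast]
    calc (N : ℝ)⁻¹ * ‖∑ n ∈ range N, v n‖ ≤ (N : ℝ)⁻¹ * N := by
          refine mul_le_mul_of_nonneg_left ?_ (by positivity)
          calc ‖∑ n ∈ range N, v n‖ ≤ ∑ n ∈ range N, ‖v n‖ := norm_sum_le _ _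
            _ ≤ ∑ n ∈ range N, 1 := Finset.sum_le_sum fun i _ => hv i
            _ = N := by simp
      _ = 1 := inv_mul_cancel₀ (by positivity)

private lemma limsup_avg_shift {𝕜 : Type*} [RCLike 𝕜] (v : ℕ → 𝕜) (hv : ∀ n, ‖v n‖ ≤ 1) (s : ℕ) :
    limsup (fun N : ℕ => ‖(N : 𝕜)⁻¹ * ∑ n ∈ range N, v (n + s)‖) atTop ≤
    limsup (fun N : ℕ => ‖(N : 𝕜)⁻¹ * ∑ n ∈ range N, v n‖) atTop := by
  refine limsup_le_limsup_of_err (fun N => norm_nonneg _) (fun N => avg_bound v hv N)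
    (fun ε hε => ?_)
  have h1 : Tendsto (fun N : ℕ => (2 * s : ℝ) / N) atTop (nhds 0) :=
    tendsto_const_div_atTop_nhds_zero_nat _
  filter_upwards [eventually_ge_atTop s, eventually_ge_atTop 1,
    (h1.eventually (gt_mem_nhds hε))] with N hNs hN1 herr
  have hNpos : (0:ℝ) < N := by exact_mod_cast hN1
  have key : ‖(N : 𝕜)⁻¹ * ∑ n ∈ range N, v (n + s)‖
      ≤ ‖(N : 𝕜)⁻¹ * ∑ n ∈ range N, v n‖ + (2 * s : ℝ) / N := by
    have : (N : 𝕜)⁻¹ * ∑ n ∈ range N, v (n + s) = (N : 𝕜)⁻¹ * ∑ n ∈ range N, v n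
        + (N : 𝕜)⁻¹ * ((∑ n ∈ range N, v (n + s)) - ∑ n ∈ range N, v n) := by ring
    rw [this]
    refine (norm_add_le _ _).trans (add_le_add (le_refl _) ?_)
    rw [norm_mul, norm_inv, RCLike.norm_natCast, div_eq_inv_mul]
    exact mul_le_mul_of_nonneg_left (shift_sum_err v hv hNs) (by positivity)
  exact key.trans (by linarith)

private lemma counting {H : ℕ} (a : ℕ → ℝ) (ha0 : ∀ k, 0 ≤ a k) :
    (∑ p ∈ range H ×ˢ range H,
      (if p.2 ≤ p.1 then a (p.1 - p.2) else a (p.2 - p.1)))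
      ≤ 2 * H * ∑ k ∈ range H, a k := by
  rw [Finset.sum_product]
  have inner : ∀ h ∈ range H,
      (∑ h' ∈ range H, (if h' ≤ h then a (h - h') else a (h' - h)))
        ≤ 2 * ∑ k ∈ range H, a k := by
    intro h hh
    rw [mem_range] at hh
    rw [← Finset.sum_range_add_sum_Ico _ (Nat.succ_le_of_lt hh)]
    have part1 : (∑ h' ∈ range (h+1), (if h' ≤ h then a (h - h') else a (h' - h)))
        ≤ ∑ k ∈ range H, a k := by
      have e1 : (∑ h' ∈ range (h+1), (if h' ≤ h then a (h - h') else a (h' - h)))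
          = ∑ h' ∈ range (h+1), a (h - h') := by
        refine Finset.sum_congr rfl fun h' hh' => ?_
        rw [mem_range, Nat.lt_succ_iff] at hh'
        rw [if_pos hh']
      have e2 : ∑ h' ∈ range (h+1), a (h - h') = ∑ k ∈ range (h+1), a k := by
        have := Finset.sum_range_reflect a (h+1)
        simpa using this
      rw [e1, e2]
      exact Finset.sum_le_sum_of_subset_of_nonneg
        (Finset.range_subset_range.2 (Nat.succ_le_of_lt hh)) (fun i _ _ => ha0 i)
    have part2 : (∑ h' ∈ Ico (h+1) H, (if h' ≤ h then a (h - h') else a (h' - h)))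
        ≤ ∑ k ∈ range H, a k := by
      have e1 : (∑ h' ∈ Ico (h+1) H, (if h' ≤ h then a (h - h') else a (h' - h)))
          = ∑ h' ∈ Ico (h+1) H, a (h' - h) := by
        refine Finset.sum_congr rfl fun h' hh' => ?_
        rw [mem_Ico] at hh'
        rw [if_neg (by omega)]
      have e2 : ∑ h' ∈ Ico (h+1) H, a (h' - h) = ∑ i ∈ range (H - (h+1)), a (i + 1) := by
        rw [Finset.sum_Ico_eq_sum_range]
        exact Finset.sum_congr rfl fun i _ => by congr 1; omega
      have e3 : ∑ i ∈ range (H - (h+1)), a (i + 1) = ∑ k ∈ Ico 1 (H - (h+1) + 1), a k := by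
        rw [Finset.sum_Ico_eq_sum_range]
        simp only [Nat.add_sub_cancel]
        exact Finset.sum_congr rfl fun i _ => by rw [add_comm]
      rw [e1, e2, e3]
      refine Finset.sum_le_sum_of_subset_of_nonneg ?_ (fun i _ _ => ha0 i)
      rw [Finset.range_eq_Ico]
      exact Finset.Ico_subset_Ico (Nat.zero_le 1) (by omega)
    linarith
  calc (∑ h ∈ range H, ∑ h' ∈ range H, (if h' ≤ h then a (h - h') else a (h' - h)))
      ≤ ∑ h ∈ range H, 2 * ∑ k ∈ range H, a k := Finset.sum_le_sum inner
    _ = 2 * H * ∑ k ∈ range H, a k := by rw [Finset.sum_const, card_range]; ring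

private lemma pointwise_bound {𝕜 E : Type*} [RCLike 𝕜]
    [NormedAddCommGroup E] [InnerProductSpace 𝕜 E]
    (u : ℕ → E) (hu : ∀ n, ‖u n‖ ≤ 1) {H N : ℕ} (hH : 1 ≤ H) (hN : H ≤ N) :
    ‖(N : 𝕜)⁻¹ • ∑ n ∈ range N, u n‖ ^ 2 ≤
      (∑ p ∈ range H ×ˢ range H,
        ((H : ℝ)⁻¹ ^ 2 * ‖(N : 𝕜)⁻¹ * ∑ n ∈ range N, (inner 𝕜 (u (n + p.1)) (u (n + p.2)) : 𝕜)‖))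
      + (4 * H / N + 4 * H ^ 2 / N ^ 2) := by
  have hN1 : 1 ≤ N := hH.trans hN
  have hNR : (0:ℝ) < N := by exact_mod_cast hN1
  have hHR : (0:ℝ) < H := by exact_mod_cast hH
  have hH𝕜 : (H : 𝕜) ≠ 0 := by exact_mod_cast hHR.ne'
  set S : E := (N : 𝕜)⁻¹ • ∑ n ∈ range N, u n with hS
  set T : E := (N : 𝕜)⁻¹ • (H : 𝕜)⁻¹ • ∑ n ∈ range N, ∑ h ∈ range H, u (n + h) with hT
  have norm_smul2 : ∀ y : E, ‖(N : 𝕜)⁻¹ • (H : 𝕜)⁻¹ • y‖ = (N:ℝ)⁻¹ * ((H:ℝ)⁻¹ * ‖y‖) := by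
    intro y
    rw [norm_smul, norm_smul, norm_inv, norm_inv, RCLike.norm_natCast, RCLike.norm_natCast]
  -- Part A : ‖S - T‖ ≤ 2H/N
  have hST : ‖S - T‖ ≤ 2 * H / N := by
    have e1 : S - T = (N : 𝕜)⁻¹ • (H : 𝕜)⁻¹ •
        ∑ h ∈ range H, ((∑ n ∈ range N, u n) - ∑ n ∈ range N, u (n + h)) := by
      rw [hS, hT, Finset.sum_comm (s := range N) (t := range H)]
      rw [Finset.sum_sub_distrib]
      rw [smul_sub, smul_sub]
      congr 1
      rw [Finset.sum_const, card_range]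
      congr 1
      rw [← Nat.cast_smul_eq_nsmul 𝕜, inv_smul_smul₀ hH𝕜]
    rw [e1, norm_smul2]
    have bnd : ‖∑ h ∈ range H, ((∑ n ∈ range N, u n) - ∑ n ∈ range N, u (n + h))‖
        ≤ H * (2 * H) := by
      calc ‖∑ h ∈ range H, ((∑ n ∈ range N, u n) - ∑ n ∈ range N, u (n + h))‖
          ≤ ∑ h ∈ range H, ‖(∑ n ∈ range N, u n) - ∑ n ∈ range N, u (n + h)‖ :=
            norm_sum_le _ _
        _ ≤ ∑ h ∈ range H, (2 * H : ℝ) := by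
            refine Finset.sum_le_sum fun h hh => ?_
            rw [mem_range] at hh
            rw [norm_sub_rev]
            refine (shift_sum_err u hu (le_trans (le_of_lt hh) hN)).trans ?_
            have : (h:ℝ) ≤ H := by exact_mod_cast (le_of_lt hh)
            linarith
        _ = H * (2 * H) := by rw [Finset.sum_const, card_range, nsmul_eq_mul]
    calc (N:ℝ)⁻¹ * ((H:ℝ)⁻¹ * ‖∑ h ∈ range H, ((∑ n ∈ range N, u n) - ∑ n ∈ range N, u (n + h))‖)
        ≤ (N:ℝ)⁻¹ * ((H:ℝ)⁻¹ * (H * (2 * H))) := by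
          refine mul_le_mul_of_nonneg_left (mul_le_mul_of_nonneg_left bnd (by positivity)) (by positivity)
      _ = 2 * H / N := by field_simp
  -- Part B : ‖T‖ ≤ 1
  have hT1 : ‖T‖ ≤ 1 := by
    rw [hT, norm_smul2]
    have bnd : ‖∑ n ∈ range N, ∑ h ∈ range H, u (n + h)‖ ≤ (N : ℝ) * H := by
      calc ‖∑ n ∈ range N, ∑ h ∈ range H, u (n + h)‖
          ≤ ∑ n ∈ range N, ‖∑ h ∈ range H, u (n + h)‖ := norm_sum_le _ _
        _ ≤ ∑ n ∈ range N, (H : ℝ) := by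
            refine Finset.sum_le_sum fun n _ => ?_
            calc ‖∑ h ∈ range H, u (n + h)‖ ≤ ∑ h ∈ range H, ‖u (n + h)‖ := norm_sum_le _ _
              _ ≤ ∑ h ∈ range H, 1 := Finset.sum_le_sum fun h _ => hu _
              _ = (H : ℝ) := by simp
        _ = (N : ℝ) * H := by rw [Finset.sum_const, card_range, nsmul_eq_mul]
    calc (N:ℝ)⁻¹ * ((H:ℝ)⁻¹ * ‖∑ n ∈ range N, ∑ h ∈ range H, u (n + h)‖)
        ≤ (N:ℝ)⁻¹ * ((H:ℝ)⁻¹ * ((N:ℝ) * H)) := by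
          refine mul_le_mul_of_nonneg_left (mul_le_mul_of_nonneg_left bnd (by positivity)) (by positivity)
      _ = 1 := by field_simp
  -- Part C : ‖T‖^2 ≤ ∑ over pairs
  have hT2 : ‖T‖ ^ 2 ≤ ∑ p ∈ range H ×ˢ range H,
      ((H : ℝ)⁻¹ ^ 2 * ‖(N : 𝕜)⁻¹ * ∑ n ∈ range N, (inner 𝕜 (u (n + p.1)) (u (n + p.2)) : 𝕜)‖) := by
    set x : ℕ → E := fun n => ∑ h ∈ range H, u (n + h) with hx
    have c1 : ‖∑ n ∈ range N, x n‖ ^ 2 ≤ (N : ℝ) * ∑ n ∈ range N, ‖x n‖ ^ 2 := by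
      have s1 : ‖∑ n ∈ range N, x n‖ ≤ ∑ n ∈ range N, ‖x n‖ := norm_sum_le _ _
      have s2 : (∑ n ∈ range N, ‖x n‖) ^ 2 ≤ (N : ℝ) * ∑ n ∈ range N, ‖x n‖ ^ 2 := by
        have := sq_sum_le_card_mul_sum_sq (s := range N) (f := fun n => ‖x n‖)
        simpa [card_range] using this
      calc ‖∑ n ∈ range N, x n‖ ^ 2 ≤ (∑ n ∈ range N, ‖x n‖) ^ 2 := by
            exact pow_le_pow_left₀ (norm_nonneg _) s1 2
        _ ≤ (N : ℝ) * ∑ n ∈ range N, ‖x n‖ ^ 2 := s2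
    have c2 : ∀ n, ‖x n‖ ^ 2 = ∑ p ∈ range H ×ˢ range H,
        RCLike.re (inner 𝕜 (u (n + p.1)) (u (n + p.2)) : 𝕜) := by
      intro n
      rw [← inner_self_eq_norm_sq (𝕜 := 𝕜) (x n), hx]
      rw [sum_inner]
      rw [map_sum]
      rw [Finset.sum_product]
      refine Finset.sum_congr rfl fun h _ => ?_
      rw [inner_sum, map_sum]
    have c3 : ∑ n ∈ range N, ‖x n‖ ^ 2 ≤
        ∑ p ∈ range H ×ˢ range H, ‖∑ n ∈ range N, (inner 𝕜 (u (n + p.1)) (u (n + p.2)) : 𝕜)‖ := by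
      calc ∑ n ∈ range N, ‖x n‖ ^ 2
          = ∑ n ∈ range N, ∑ p ∈ range H ×ˢ range H,
              RCLike.re (inner 𝕜 (u (n + p.1)) (u (n + p.2)) : 𝕜) := by
            exact Finset.sum_congr rfl fun n _ => c2 n
        _ = ∑ p ∈ range H ×ˢ range H, ∑ n ∈ range N,
              RCLike.re (inner 𝕜 (u (n + p.1)) (u (n + p.2)) : 𝕜) := Finset.sum_comm
        _ ≤ ∑ p ∈ range H ×ˢ range H, ‖∑ n ∈ range N, (inner 𝕜 (u (n + p.1)) (u (n + p.2)) : 𝕜)‖ := by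
            refine Finset.sum_le_sum fun p _ => ?_
            rw [← map_sum]
            exact RCLike.re_le_norm _
    have hTnorm : ‖T‖ ^ 2 = ((N:ℝ)⁻¹ * (H:ℝ)⁻¹) ^ 2 * ‖∑ n ∈ range N, x n‖ ^ 2 := by
      rw [hT, norm_smul2, hx]
      ring
    rw [hTnorm]
    calc ((N:ℝ)⁻¹ * (H:ℝ)⁻¹) ^ 2 * ‖∑ n ∈ range N, x n‖ ^ 2
        ≤ ((N:ℝ)⁻¹ * (H:ℝ)⁻¹) ^ 2 * ((N : ℝ) * ∑ n ∈ range N, ‖x n‖ ^ 2) := by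
          exact mul_le_mul_of_nonneg_left c1 (by positivity)
      _ ≤ ((N:ℝ)⁻¹ * (H:ℝ)⁻¹) ^ 2 * ((N : ℝ) *
            ∑ p ∈ range H ×ˢ range H, ‖∑ n ∈ range N, (inner 𝕜 (u (n + p.1)) (u (n + p.2)) : 𝕜)‖) := by
          refine mul_le_mul_of_nonneg_left (mul_le_mul_of_nonneg_left c3 (by positivity)) (by positivity)
      _ = ∑ p ∈ range H ×ˢ range H,
            ((H : ℝ)⁻¹ ^ 2 * ‖(N : 𝕜)⁻¹ * ∑ n ∈ range N, (inner 𝕜 (u (n + p.1)) (u (n + p.2)) : 𝕜)‖) := by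
          rw [Finset.mul_sum, Finset.mul_sum]
          refine Finset.sum_congr rfl fun p _ => ?_
          rw [norm_mul, norm_inv, RCLike.norm_natCast]
          field_simp
  -- Part D : combine
  have hSnorm : ‖S‖ ≤ ‖T‖ + 2 * H / N := by
    have h := norm_sub_norm_le S T
    linarith
  have hd : (0:ℝ) ≤ 2 * H / N := by positivity
  have hS0 : (0:ℝ) ≤ ‖S‖ := norm_nonneg _
  have hT0 : (0:ℝ) ≤ ‖T‖ := norm_nonneg _
  have h2 : (2 * (H:ℝ) / N) * (2 * (H:ℝ) / N) = 4 * (H:ℝ) ^ 2 / (N:ℝ) ^ 2 := by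
    field_simp
    ring
  have hSq : ‖S‖ * ‖S‖ ≤ (‖T‖ + 2 * H / N) * (‖T‖ + 2 * H / N) :=
    mul_le_mul hSnorm hSnorm hS0 (by positivity)
  have expand : (‖T‖ + 2 * H / N) * (‖T‖ + 2 * H / N)
      = ‖T‖ ^ 2 + 2 * (2 * H / N) * ‖T‖ + (2 * H / N) * (2 * H / N) := by ring
  have hcross : 2 * (2 * H / N) * ‖T‖ ≤ 4 * H / N := by
    have := mul_le_mul_of_nonneg_left hT1 (by positivity : (0:ℝ) ≤ 2 * (2 * H / N))
    calc 2 * (2 * H / N) * ‖T‖ ≤ 2 * (2 * H / N) * 1 := this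
      _ = 4 * H / N := by ring
  have hpow : ‖S‖ ^ 2 = ‖S‖ * ‖S‖ := sq (‖S‖) ▸ (by ring)
  rw [hpow]
  rw [expand] at hSq
  linarith [hSq, hT2, hcross, h2]

private lemma inner_norm_le_one {𝕜 E : Type*} [RCLike 𝕜]
    [NormedAddCommGroup E] [InnerProductSpace 𝕜 E]
    (u : ℕ → E) (hu : ∀ n, ‖u n‖ ≤ 1) (m n : ℕ) :
    ‖(inner 𝕜 (u m) (u n) : 𝕜)‖ ≤ 1 := by
  refine (norm_inner_le_norm _ _).trans ?_
  exact mul_le_one₀ (hu m) (norm_nonneg _) (hu n)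

private lemma c_symm {𝕜 E : Type*} [RCLike 𝕜]
    [NormedAddCommGroup E] [InnerProductSpace 𝕜 E]
    (u : ℕ → E) (h h' N : ℕ) :
    ‖(N : 𝕜)⁻¹ * ∑ n ∈ range N, (inner 𝕜 (u (n + h)) (u (n + h')) : 𝕜)‖
      = ‖(N : 𝕜)⁻¹ * ∑ n ∈ range N, (inner 𝕜 (u (n + h')) (u (n + h)) : 𝕜)‖ := by
  have e : (∑ n ∈ range N, (inner 𝕜 (u (n + h)) (u (n + h')) : 𝕜))
      = (starRingEnd 𝕜) (∑ n ∈ range N, (inner 𝕜 (u (n + h')) (u (n + h)) : 𝕜)) := by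
    rw [map_sum]
    exact Finset.sum_congr rfl fun n _ => (inner_conj_symm _ _).symm
  rw [e, norm_mul, norm_mul, RCLike.norm_conj]

private lemma limsup_c_le {𝕜 E : Type*} [RCLike 𝕜]
    [NormedAddCommGroup E] [InnerProductSpace 𝕜 E]
    (u : ℕ → E) (hu : ∀ n, ‖u n‖ ≤ 1) {h h' : ℕ} (hle : h' ≤ h) :
    limsup (fun N : ℕ => ‖(N : 𝕜)⁻¹ * ∑ n ∈ range N, (inner 𝕜 (u (n + h)) (u (n + h')) : 𝕜)‖) atTop
      ≤ limsup (fun N : ℕ =>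
          ‖(N : 𝕜)⁻¹ * ∑ n ∈ range N, (inner 𝕜 (u (n + (h - h'))) (u n) : 𝕜)‖) atTop := by
  have hw : ∀ n, ‖(inner 𝕜 (u (n + (h - h'))) (u n) : 𝕜)‖ ≤ 1 := fun n =>
    inner_norm_le_one u hu _ _
  have e : (fun N : ℕ => ‖(N : 𝕜)⁻¹ * ∑ n ∈ range N, (inner 𝕜 (u (n + h)) (u (n + h')) : 𝕜)‖)
      = fun N : ℕ => ‖(N : 𝕜)⁻¹ * ∑ n ∈ range N,
          (fun m => (inner 𝕜 (u (m + (h - h'))) (u m) : 𝕜)) (n + h')‖ := by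
    funext N
    congr 1
    congr 1
    refine Finset.sum_congr rfl fun n _ => ?_
    simp only []
    rw [show n + h = n + h' + (h - h') from by omega]
  rw [e]
  exact limsup_avg_shift _ hw h'

private lemma main_key {𝕜 E : Type*} [RCLike 𝕜]
    [NormedAddCommGroup E] [InnerProductSpace 𝕜 E]
    (u : ℕ → E) (hu : ∀ n, ‖u n‖ ≤ 1) {H : ℕ} (hH : 1 ≤ H) :
    limsup (fun N : ℕ => ‖(N : 𝕜)⁻¹ • ∑ n ∈ Finset.range N, u n‖ ^ 2) atTop ≤
      2 * ((H : ℝ)⁻¹ * ∑ h ∈ Finset.range H,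
        limsup (fun N : ℕ =>
          ‖(N : 𝕜)⁻¹ * ∑ n ∈ Finset.range N, (inner 𝕜 (u (n + h)) (u n) : 𝕜)‖) atTop) := by
  have hHR : (0:ℝ) < H := by exact_mod_cast hH
  set a : ℕ → ℝ := fun h => limsup (fun N : ℕ =>
    ‖(N : 𝕜)⁻¹ * ∑ n ∈ Finset.range N, (inner 𝕜 (u (n + h)) (u n) : 𝕜)‖) atTop with ha
  set c : ℕ × ℕ → ℕ → ℝ := fun p N =>
    ‖(N : 𝕜)⁻¹ * ∑ n ∈ range N, (inner 𝕜 (u (n + p.1)) (u (n + p.2)) : 𝕜)‖ with hc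
  have hc0 : ∀ p N, 0 ≤ c p N := fun p N => norm_nonneg _
  have hc1 : ∀ p N, c p N ≤ 1 := fun p N =>
    avg_bound (fun n => (inner 𝕜 (u (n + p.1)) (u (n + p.2)) : 𝕜))
      (fun n => inner_norm_le_one u hu _ _) N
  have ha0 : ∀ k, 0 ≤ a k := fun k =>
    limsup01_nonneg (fun N => norm_nonneg _)
      (fun N => avg_bound _ (fun n => inner_norm_le_one u hu _ _) N)
  have hHinv1 : (H:ℝ)⁻¹ ^ 2 ≤ 1 := by
    have h1 : (1:ℝ) ≤ H := by exact_mod_cast hH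
    have : (H:ℝ)⁻¹ ≤ 1 := by
      rw [inv_le_one_iff₀]; right; exact h1
    exact pow_le_one₀ (by positivity) this
  -- step 1
  have step1 : limsup (fun N : ℕ => ‖(N : 𝕜)⁻¹ • ∑ n ∈ Finset.range N, u n‖ ^ 2) atTop ≤
      limsup (fun N : ℕ => ∑ p ∈ range H ×ˢ range H, (H : ℝ)⁻¹ ^ 2 * c p N) atTop := by
    refine limsup_le_limsup_of_err (C := (H:ℝ) * H) (fun N => sq_nonneg _) (fun N => ?_)
      (fun ε hε => ?_)
    · calc ∑ p ∈ range H ×ˢ range H, (H : ℝ)⁻¹ ^ 2 * c p N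
          ≤ ∑ p ∈ range H ×ˢ range H, 1 := by
            refine Finset.sum_le_sum fun p _ => ?_
            calc (H : ℝ)⁻¹ ^ 2 * c p N ≤ 1 * 1 :=
                mul_le_mul hHinv1 (hc1 p N) (hc0 p N) zero_le_one
              _ = 1 := one_mul 1
        _ = (H:ℝ) * H := by
            rw [Finset.sum_const, Finset.card_product, card_range, nsmul_eq_mul]
            push_cast; ring
    · have htend := (tendsto_const_div_atTop_nhds_zero_nat (4 * (H:ℝ) + 4 * (H:ℝ)^2)).eventually
        (gt_mem_nhds hε)
      filter_upwards [eventually_ge_atTop H, eventually_ge_atTop 1, htend] with N hNH hN1 herr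
      have hNR : (0:ℝ) < N := by exact_mod_cast hN1
      have hb := pointwise_bound (𝕜 := 𝕜) u hu hH hNH
      have herr2 : (4 * H / N + 4 * H ^ 2 / N ^ 2 : ℝ) ≤ (4 * H + 4 * H^2 : ℝ) / N := by
        have hN1R : (1:ℝ) ≤ N := by exact_mod_cast hN1
        have hNN : (N:ℝ) ≤ (N:ℝ)^2 := by nlinarith [hN1R]
        have : (4 * (H:ℝ)^2) / (N:ℝ)^2 ≤ (4 * (H:ℝ)^2) / N :=
          div_le_div_of_nonneg_left (by positivity) hNR hNN
        rw [add_div]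
        linarith
      exact hb.trans (by linarith)
  -- step 2
  have step2 : limsup (fun N : ℕ => ∑ p ∈ range H ×ˢ range H, (H : ℝ)⁻¹ ^ 2 * c p N) atTop ≤
      ∑ p ∈ range H ×ˢ range H, limsup (fun N => (H : ℝ)⁻¹ ^ 2 * c p N) atTop := by
    refine limsup_sum_le _ _ (fun p _ N => by positivity) (fun p _ N => ?_)
    calc (H : ℝ)⁻¹ ^ 2 * c p N ≤ 1 * 1 :=
        mul_le_mul hHinv1 (hc1 p N) (hc0 p N) zero_le_one
      _ = 1 := one_mul 1
  -- step 3 + 4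
  have step34 : ∀ p ∈ range H ×ˢ range H,
      limsup (fun N => (H : ℝ)⁻¹ ^ 2 * c p N) atTop ≤
        (H : ℝ)⁻¹ ^ 2 * (if p.2 ≤ p.1 then a (p.1 - p.2) else a (p.2 - p.1)) := by
    intro p _
    refine (limsup_const_mul_le' (by positivity) (hc0 p) (hc1 p)).trans ?_
    refine mul_le_mul_of_nonneg_left ?_ (by positivity)
    by_cases hle : p.2 ≤ p.1
    · rw [if_pos hle]
      exact limsup_c_le u hu hle
    · rw [if_neg hle]
      have e : (fun N => c p N) = fun N : ℕ =>
          ‖(N : 𝕜)⁻¹ * ∑ n ∈ range N, (inner 𝕜 (u (n + p.2)) (u (n + p.1)) : 𝕜)‖ := by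
        funext N
        exact c_symm u p.1 p.2 N
      calc limsup (fun N => c p N) atTop
          = limsup (fun N : ℕ =>
              ‖(N : 𝕜)⁻¹ * ∑ n ∈ range N, (inner 𝕜 (u (n + p.2)) (u (n + p.1)) : 𝕜)‖) atTop := by
            rw [e]
        _ ≤ a (p.2 - p.1) := limsup_c_le u hu (le_of_not_ge hle)
  -- assemble
  have sum34 : ∑ p ∈ range H ×ˢ range H, limsup (fun N => (H : ℝ)⁻¹ ^ 2 * c p N) atTop ≤
      (H : ℝ)⁻¹ ^ 2 * ∑ p ∈ range H ×ˢ range H,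
        (if p.2 ≤ p.1 then a (p.1 - p.2) else a (p.2 - p.1)) := by
    rw [Finset.mul_sum]
    exact Finset.sum_le_sum step34
  have cnt := counting (H := H) a ha0
  have final : (H : ℝ)⁻¹ ^ 2 * ∑ p ∈ range H ×ˢ range H,
      (if p.2 ≤ p.1 then a (p.1 - p.2) else a (p.2 - p.1))
        ≤ 2 * ((H : ℝ)⁻¹ * ∑ h ∈ Finset.range H, a h) := by
    calc (H : ℝ)⁻¹ ^ 2 * ∑ p ∈ range H ×ˢ range H,
        (if p.2 ≤ p.1 then a (p.1 - p.2) else a (p.2 - p.1))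
        ≤ (H : ℝ)⁻¹ ^ 2 * (2 * H * ∑ k ∈ range H, a k) :=
          mul_le_mul_of_nonneg_left cnt (by positivity)
      _ = 2 * ((H : ℝ)⁻¹ * ∑ h ∈ Finset.range H, a h) := by
          field_simp
  calc limsup (fun N : ℕ => ‖(N : 𝕜)⁻¹ • ∑ n ∈ Finset.range N, u n‖ ^ 2) atTop
      ≤ limsup (fun N : ℕ => ∑ p ∈ range H ×ˢ range H, (H : ℝ)⁻¹ ^ 2 * c p N) atTop := step1
    _ ≤ ∑ p ∈ range H ×ˢ range H, limsup (fun N => (H : ℝ)⁻¹ ^ 2 * c p N) atTop := step2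
    _ ≤ (H : ℝ)⁻¹ ^ 2 * ∑ p ∈ range H ×ˢ range H,
          (if p.2 ≤ p.1 then a (p.1 - p.2) else a (p.2 - p.1)) := sum34
    _ ≤ 2 * ((H : ℝ)⁻¹ * ∑ h ∈ Finset.range H, a h) := final

/-- The van der Corput inequality in a Hilbert space: if `‖u_n‖ ≤ 1` for all `n`, then
`limsup_N ‖(1/N) ∑_{n<N} u_n‖² ≤ 4 · liminf_H (1/H) ∑_{h<H} limsup_N |(1/N) ∑_{n<N} ⟨u_{n+h}, u_n⟩|`. -/
theorem van_der_corput_hilbert {𝕜 E : Type*} [RCLike 𝕜]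
    [NormedAddCommGroup E] [InnerProductSpace 𝕜 E]
    (u : ℕ → E) (hu : ∀ n, ‖u n‖ ≤ 1) :
    limsup (fun N : ℕ => ‖(N : 𝕜)⁻¹ • ∑ n ∈ Finset.range N, u n‖ ^ 2) atTop ≤
      4 * liminf (fun H : ℕ => (H : ℝ)⁻¹ * ∑ h ∈ Finset.range H,
          limsup (fun N : ℕ =>
            ‖(N : 𝕜)⁻¹ * ∑ n ∈ Finset.range N, (inner 𝕜 (u (n + h)) (u n) : 𝕜)‖) atTop) atTop := by
  
  set g : ℕ → ℝ := fun H : ℕ => (H : ℝ)⁻¹ * ∑ h ∈ Finset.range H,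
      limsup (fun N : ℕ =>
        ‖(N : 𝕜)⁻¹ * ∑ n ∈ Finset.range N, (inner 𝕜 (u (n + h)) (u n) : 𝕜)‖) atTop with hg
  set L : ℝ := limsup (fun N : ℕ => ‖(N : 𝕜)⁻¹ • ∑ n ∈ Finset.range N, u n‖ ^ 2) atTop with hL
  have hg0 : ∀ H, 0 ≤ g H := by
    intro H
    refine mul_nonneg (by positivity) (Finset.sum_nonneg fun h _ => ?_)
    exact limsup01_nonneg (fun N => norm_nonneg _)
      (fun N => avg_bound _ (fun n => inner_norm_le_one u hu _ _) N)
  have hg1 : ∀ H, g H ≤ 1 := by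
    intro H
    rcases Nat.eq_zero_or_pos H with rfl | hHpos
    · simp [hg]
    · have hHR : (0:ℝ) < H := by exact_mod_cast hHpos
      rw [hg]
      calc (H : ℝ)⁻¹ * ∑ h ∈ Finset.range H,
            limsup (fun N : ℕ =>
              ‖(N : 𝕜)⁻¹ * ∑ n ∈ Finset.range N, (inner 𝕜 (u (n + h)) (u n) : 𝕜)‖) atTop
          ≤ (H : ℝ)⁻¹ * ∑ h ∈ Finset.range H, 1 := by
            refine mul_le_mul_of_nonneg_left (Finset.sum_le_sum fun h _ => ?_) (by positivity)
            exact limsup01_le (fun N => norm_nonneg _)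
              (fun N => avg_bound _ (fun n => inner_norm_le_one u hu _ _) N)
        _ = 1 := by
            rw [Finset.sum_const, card_range, nsmul_eq_mul, mul_one]
            exact inv_mul_cancel₀ hHR.ne'
  have hcob : IsCoboundedUnder (· ≥ ·) (atTop : Filter ℕ) g :=
    isCoboundedUnder_ge_of_le _ fun H => hg1 H
  have hkey : ∀ᶠ H in (atTop : Filter ℕ), L / 2 ≤ g H := by
    filter_upwards [eventually_ge_atTop 1] with H hH
    have := main_key u hu (𝕜 := 𝕜) hH
    have h' : L ≤ 2 * g H := this
    linarith
  have h1 : L / 2 ≤ liminf g atTop := le_liminf_of_le hcob hkey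
  have h2 : (0:ℝ) ≤ liminf g atTop :=
    le_liminf_of_le hcob (Eventually.of_forall hg0)
  linarith
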